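/- Let C be an augmented ℤ_p-chain complex, let φ_j be a resolution of 1 for C, and let n ≥ 2 be even. Suppose there are cochains η ∈ C^n and b ∈ C^{n−1} such that δ(sη) = 0 and sφ_n − p·(sη) = δ(sb). Then the sequence φ̃_j defined by φ̃_j = φ_j for j < n−1, φ̃_{n−1} = φ_{n−1} − sb, φ̃_n = sη, and φ̃_j = 0 for all j > n, is a resolution of 1 for C. (Thus if the top Smith class, in even dimension n, is p-divisible, the resolution can be chosen with its n-th term of the form sη and all higher terms zero.) -/

import Mathlib

open scoped TensorProduct

/-- An augmented `ℤ_p`-chain complex: a `ℤ_p`-chain complex indexed by degrees `≥ −1`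
whose degree-`(−1)` chain group is infinite cyclic with a chosen generator `∅` fixed by
`t`.  Here `C n` is the chain group in degree `n − 1` (so `C 0` is the augmentation
degree, identified with `ℤ` by `base`, the generator `∅` corresponding to `1`). -/
structure AugComplex (p : ℕ) where
  C : ℕ → Type
  [acg : ∀ n, AddCommGroup (C n)]
  bd : ∀ n, C (n + 1) →+ C n
  bd_bd : ∀ n x, bd n (bd (n + 1) x) = 0
  t : ∀ n, C n →+ C n
  t_bd : ∀ n x, t n (bd n x) = bd n (t (n + 1) x)
  t_pow : ∀ n x, (⇑(t n))^[p] x = x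
  base : C 0 ≃+ ℤ
  t_base : ∀ x, t 0 x = x

attribute [instance] AugComplex.acg

namespace AugComplex

variable {p : ℕ} (X : AugComplex p)

/-- cochains: `Co n = Hom(C n, ℤ)` is the group of cochains in degree `n − 1`. -/
abbrev Co (n : ℕ) := X.C n →+ ℤ

/-- the chain map `t^k` -/
def tpow (n : ℕ) : ℕ → (X.C n →+ X.C n)
  | 0 => AddMonoidHom.id _
  | k + 1 => (X.t n).comp (tpow n k)

/-- `s = 1 + t + ⋯ + t^{p−1}` on chains -/
def sCh (n : ℕ) : X.C n →+ X.C n := ∑ k ∈ Finset.range p, X.tpow n k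

/-- `d = 1 − t` on chains -/
def dCh (n : ℕ) : X.C n →+ X.C n := AddMonoidHom.id _ - X.t n

/-- the coboundary `δφ = φ ∘ ∂` -/
def cb (n : ℕ) : X.Co n →+ X.Co (n + 1) where
  toFun φ := φ.comp (X.bd n)
  map_zero' := by ext x; simp
  map_add' _ _ := by ext x; simp

/-- the cochain map `t^k` -/
def tCo (n k : ℕ) : X.Co n →+ X.Co n where
  toFun φ := φ.comp (X.tpow n k)
  map_zero' := by ext x; simp
  map_add' _ _ := by ext x; simp

/-- `s = 1 + t + ⋯ + t^{p−1}` on cochains -/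
def sCo (n : ℕ) : X.Co n →+ X.Co n where
  toFun φ := φ.comp (X.sCh n)
  map_zero' := by ext x; simp
  map_add' _ _ := by ext x; simp

/-- `d = 1 − t` on cochains -/
def dCo (n : ℕ) : X.Co n →+ X.Co n where
  toFun φ := φ.comp (X.dCh n)
  map_zero' := by ext x; simp
  map_add' _ _ := by ext x; simp

/-- the cochain `1_C = δ(∅*) ∈ C^0` -/
def one : X.Co 1 := X.base.toAddMonoidHom.comp (X.bd 0)

/-- `φ_0, φ_1, φ_2, …` is a resolution of `1` for `X`:  `sφ_0 = 1`, `δφ_j = dφ_{j+1}`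
for even `j`, and `δφ_j = sφ_{j+1}` for odd `j`.  (Here `φ j : Co (j+1)` is the
cochain in degree `j`.) -/
def IsRes (φ : ∀ j : ℕ, X.Co (j + 1)) : Prop :=
  X.sCo 1 (φ 0) = X.one ∧
  (∀ j, Even j → X.cb (j + 1) (φ j) = X.dCo (j + 2) (φ (j + 1))) ∧
  (∀ j, Odd j → X.cb (j + 1) (φ j) = X.sCo (j + 2) (φ (j + 1)))

/-- transport of cochains along an equality of degrees -/
def castCoX {m n : ℕ} (h : m = n) (f : X.Co m) : X.Co n := h ▸ f

end AugComplex

open AugComplex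

namespace AugComplex

private lemma sum_iterate_shift {A : Type*} [AddCommGroup A] (g : A → A) (x : A) (P : ℕ)
    (hg : g^[P] x = x) :
    ∑ k ∈ Finset.range P, g^[k + 1] x = ∑ k ∈ Finset.range P, g^[k] x := by
  cases P with
  | zero => simp
  | succ q =>
    rw [Finset.sum_range_succ, Finset.sum_range_succ' (fun k => g^[k] x)]
    simp [hg]

variable {p : ℕ} (X : AugComplex p)

lemma tpow_apply (m k : ℕ) (x : X.C m) : X.tpow m k x = (⇑(X.t m))^[k] x := by
  induction k with
  | zero => rfl
  | succ k ih => simp [tpow, ih, Function.iterate_succ_apply']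

lemma sCh_apply (m : ℕ) (x : X.C m) :
    X.sCh m x = ∑ k ∈ Finset.range p, (⇑(X.t m))^[k] x := by
  simp [sCh, AddMonoidHom.finset_sum_apply, tpow_apply]

lemma t_sCh (m : ℕ) (x : X.C m) : X.t m (X.sCh m x) = X.sCh m x := by
  rw [sCh_apply, map_sum]
  simp only [← Function.iterate_succ_apply']
  rw [sum_iterate_shift _ _ _ (X.t_pow m x), ← sCh_apply]

lemma sCh_t (m : ℕ) (x : X.C m) : X.sCh m (X.t m x) = X.sCh m x := by
  rw [sCh_apply, sCh_apply]
  simp only [← Function.iterate_succ_apply]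
  exact sum_iterate_shift _ _ _ (X.t_pow m x)

lemma sCh_dCh (m : ℕ) (x : X.C m) : X.sCh m (X.dCh m x) = 0 := by
  have : X.dCh m x = x - X.t m x := rfl
  rw [this, map_sub, sCh_t, sub_self]

lemma sCh_sCh (m : ℕ) (x : X.C m) : X.sCh m (X.sCh m x) = p • X.sCh m x := by
  rw [X.sCh_apply m (X.sCh m x)]
  have h : ∀ k : ℕ, (⇑(X.t m))^[k] (X.sCh m x) = X.sCh m x := fun k =>
    Function.iterate_fixed (X.t_sCh m x) k
  simp [h]

lemma dCo_sCo (m : ℕ) (f : X.Co m) : X.dCo m (X.sCo m f) = 0 := by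
  ext x
  show f (X.sCh m (X.dCh m x)) = 0
  rw [sCh_dCh, map_zero]

lemma sCo_sCo (m : ℕ) (f : X.Co m) : X.sCo m (X.sCo m f) = p • X.sCo m f := by
  ext x
  show f (X.sCh m (X.sCh m x)) = (p • X.sCo m f) x
  rw [sCh_sCh, map_nsmul]
  rfl

end AugComplex


/-- **Normal form of a resolution when the top Smith class is `p`-divisible.**
Let `C` be an augmented `ℤ_p`-chain complex, `φ_j` a resolution of `1` for `C`, and let
`n ≥ 2` be even.  Suppose there are cochains `η ∈ C^n` and `b ∈ C^{n−1}` such that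
`δ(sη) = 0` and `sφ_n − p·(sη) = δ(sb)`.  Then the sequence `φ̃_j` defined by
`φ̃_j = φ_j` for `j < n−1`, `φ̃_{n−1} = φ_{n−1} − sb`, `φ̃_n = sη`, and `φ̃_j = 0` for
all `j > n`, is a resolution of `1` for `C`. -/
theorem resolution_with_s_cocycle_top_term
    (p : ℕ) (hp : p.Prime) (X : AugComplex p)
    (φ : ∀ j, X.Co (j + 1)) (hres : X.IsRes φ)
    (n : ℕ) (hn : 2 ≤ n) (hne : Even n)
    (η : X.Co (n + 1)) (b : X.Co n)
    (hη : X.cb (n + 1) (X.sCo (n + 1) η) = 0)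
    (hb : X.sCo (n + 1) (φ n) - p • X.sCo (n + 1) η = X.cb n (X.sCo n b)) :
    X.IsRes (fun j =>
      if j < n - 1 then φ j
      else if hj : j = n - 1 then
        X.castCoX (by omega) (φ (n - 1)) -
          X.castCoX (by omega) (X.sCo n b)
      else if hj' : j = n then
        X.castCoX (by omega) (X.sCo (n + 1) η)
      else 0) := by
  obtain ⟨k, rfl⟩ : ∃ k, n = k + 2 := ⟨n - 2, by omega⟩
  obtain ⟨K, hK⟩ := hne
  obtain ⟨hres1, hres2, hres3⟩ := hres
  refine ⟨?_, ?_, ?_⟩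
  · simp only []
    rw [if_pos (show (0:ℕ) < k + 2 - 1 by omega)]
    exact hres1
  · intro j hj
    obtain ⟨J, hJ⟩ := hj
    simp only []
    by_cases h1 : j < k
    · rw [if_pos (show j < k + 2 - 1 by omega), if_pos (show j + 1 < k + 2 - 1 by omega)]
      exact hres2 j ⟨J, hJ⟩
    by_cases h2 : j = k
    · subst h2
      rw [if_pos (show j < j + 2 - 1 by omega), if_neg (show ¬ j + 1 < j + 2 - 1 by omega),
        dif_pos (show j + 1 = j + 2 - 1 by omega)]
      show X.cb (j + 1) (φ j) = X.dCo (j + 2) (φ (j + 1) - X.sCo (j + 2) b)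
      rw [map_sub, dCo_sCo, sub_zero]
      exact hres2 j ⟨J, hJ⟩
    by_cases h3 : j = k + 2
    · subst h3
      rw [if_neg (show ¬ k + 2 < k + 2 - 1 by omega),
        dif_neg (show ¬ k + 2 = k + 2 - 1 by omega), dif_pos rfl,
        if_neg (show ¬ k + 2 + 1 < k + 2 - 1 by omega),
        dif_neg (show ¬ k + 2 + 1 = k + 2 - 1 by omega),
        dif_neg (show ¬ k + 2 + 1 = k + 2 by omega)]
      show X.cb (k + 2 + 1) (X.sCo (k + 2 + 1) η) = X.dCo (k + 2 + 2) 0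
      rw [map_zero]
      exact hη
    -- j = k + 1 is impossible by parity
    have h4 : ¬ j = k + 1 := by omega
    have h5 : k + 3 ≤ j := by omega
    rw [if_neg (show ¬ j < k + 2 - 1 by omega), dif_neg (show ¬ j = k + 2 - 1 by omega),
      dif_neg h3, if_neg (show ¬ j + 1 < k + 2 - 1 by omega),
      dif_neg (show ¬ j + 1 = k + 2 - 1 by omega), dif_neg (show ¬ j + 1 = k + 2 by omega),
      map_zero, map_zero]
  · intro j hj
    obtain ⟨J, hJ⟩ := hj
    simp only []
    by_cases h1 : j < k
    · rw [if_pos (show j < k + 2 - 1 by omega), if_pos (show j + 1 < k + 2 - 1 by omega)]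
      exact hres3 j ⟨J, hJ⟩
    by_cases h2 : j = k + 1
    · subst h2
      rw [if_neg (show ¬ k + 1 < k + 2 - 1 by omega), dif_pos (show k + 1 = k + 2 - 1 by omega),
        if_neg (show ¬ k + 1 + 1 < k + 2 - 1 by omega),
        dif_neg (show ¬ k + 1 + 1 = k + 2 - 1 by omega), dif_pos (show k + 1 + 1 = k + 2 by omega)]
      show X.cb (k + 2) (φ (k + 1) - X.sCo (k + 2) b) = X.sCo (k + 3) (X.sCo (k + 3) η)
      rw [map_sub, sCo_sCo, hres3 (k + 1) ⟨J, by omega⟩, ← hb]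
      abel
    have h5 : k + 3 ≤ j := by omega
    rw [if_neg (show ¬ j < k + 2 - 1 by omega), dif_neg (show ¬ j = k + 2 - 1 by omega),
      dif_neg (show ¬ j = k + 2 by omega), if_neg (show ¬ j + 1 < k + 2 - 1 by omega),
      dif_neg (show ¬ j + 1 = k + 2 - 1 by omega), dif_neg (show ¬ j + 1 = k + 2 by omega),
      map_zero, map_zero]
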